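/- The ideal I_W equals the ideal generated by the set of all products h1^{a1} h2^{a2} v1^{b1} v2^{b2} with a1, a2, b1, b2 nonnegative integers satisfying a1 + b1 ≥ m11, a1 + b2 ≥ m12 and a2 + b1 ≥ m21. -/

import Mathlib

open MvPolynomial Pointwise

namespace FatAux

variable {k : Type*} [Field k]

lemma det_ne_zero {M : Type*} [AddCommGroup M] [Module k M] {x y h1 h2 : M}
    {a b c d : k} (hind : LinearIndependent k ![h1, h2])
    (hab : a • x + b • y = h1) (hcd : c • x + d • y = h2) :
    a * d - b * c ≠ 0 := by
  intro hΔ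
  have key := LinearIndependent.pair_iff.mp hind
  have e1 : d • h1 + (-b) • h2 = 0 := by
    rw [← hab, ← hcd]
    match_scalars
    · linear_combination hΔ
    · ring
  obtain ⟨hd, hb⟩ := key d (-b) e1
  have hb' : b = 0 := neg_eq_zero.mp hb
  have e2 : c • h1 + (-a) • h2 = 0 := by
    rw [← hab, ← hcd, hb', hd]
    match_scalars <;> ring
  obtain ⟨hc, ha⟩ := key c (-a) e2
  have ha' : a = 0 := neg_eq_zero.mp ha
  have e3 : (1:k) • h1 + (0:k) • h2 = 0 := by
    rw [← hab, ha', hb']; simp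
  exact one_ne_zero (key 1 0 e3).1

lemma span_pair_pow_eq (i j : Fin 4) (hij : i ≠ j) (m : ℕ) :
    Ideal.span ({X i, X j} : Set (MvPolynomial (Fin 4) k)) ^ m =
      Ideal.span ((fun e => monomial e (1 : k)) '' {e | m ≤ e i + e j}) := by
  apply le_antisymm
  · induction m with
    | zero =>
      rw [pow_zero, Ideal.one_eq_top, top_le_iff, Ideal.eq_top_iff_one]
      exact Ideal.subset_span ⟨0, by simp, by simp⟩
    | succ n ih =>
      rw [pow_succ]
      refine le_trans (Ideal.mul_mono_left ih) ?_
      rw [Ideal.span_mul_span']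
      rw [Ideal.span_le]
      rintro z hz
      rw [Set.mem_mul] at hz
      obtain ⟨u, hu, w, hw, rfl⟩ := hz
      obtain ⟨e, he, rfl⟩ := hu
      rcases hw with rfl | rfl
      · refine Ideal.subset_span ⟨e + Finsupp.single i 1, ?_, ?_⟩
        · simp only [Set.mem_setOf_eq, Finsupp.add_apply, Finsupp.single_apply]
          simp only [Set.mem_setOf_eq] at he
          split_ifs <;> omega
        · rw [X, monomial_mul, mul_one]
      · refine Ideal.subset_span ⟨e + Finsupp.single j 1, ?_, ?_⟩
        · simp only [Set.mem_setOf_eq, Finsupp.add_apply, Finsupp.single_apply]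
          simp only [Set.mem_setOf_eq] at he
          split_ifs <;> omega
        · rw [X, monomial_mul, mul_one]
  · rw [Ideal.span_le]
    rintro z ⟨e, he, rfl⟩
    rw [SetLike.mem_coe]
    show monomial e (1:k) ∈ _
    simp only [Set.mem_setOf_eq] at he
    set a := min (e i) m with ha
    set b := m - a with hb
    have hab : a + b = m := by omega
    have hai : a ≤ e i := min_le_left _ _
    have hbj : b ≤ e j := by omega
    have key : X i ^ a * X j ^ b ∈
        Ideal.span ({X i, X j} : Set (MvPolynomial (Fin 4) k)) ^ m := by
      rw [← hab, pow_add]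
      exact Submodule.mul_mem_mul
        (Ideal.pow_mem_pow (Ideal.subset_span (by simp)) a)
        (Ideal.pow_mem_pow (Ideal.subset_span (by simp)) b)
    have hsum : (e - Finsupp.single i a - Finsupp.single j b) +
        (Finsupp.single i a + Finsupp.single j b) = e := by
      ext n
      simp only [Finsupp.add_apply, Finsupp.tsub_apply, Finsupp.single_apply]
      by_cases hin : i = n
      · subst hin
        rw [if_pos rfl, if_neg (Ne.symm hij)]
        omega
      · by_cases hjn : j = n
        · subst hjn
          rw [if_pos rfl, if_neg hin]
          omega
        · rw [if_neg hin, if_neg hjn]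
          omega
    have hdecomp : monomial e (1:k) =
        monomial (e - Finsupp.single i a - Finsupp.single j b) 1 * (X i ^ a * X j ^ b) := by
      rw [X_pow_eq_monomial, X_pow_eq_monomial, monomial_mul, monomial_mul, hsum,
        one_mul, one_mul]
    rw [hdecomp]
    exact Ideal.mul_mem_left _ _ key

lemma mem_span_monomial_up {S : Set (Fin 4 →₀ ℕ)}
    (hS : ∀ s t : Fin 4 →₀ ℕ, s ≤ t → s ∈ S → t ∈ S) (f : MvPolynomial (Fin 4) k) :
    f ∈ Ideal.span ((fun e => monomial e (1 : k)) '' S) ↔ ∀ xi ∈ f.support, xi ∈ S := by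
  rw [mem_ideal_span_monomial_image]
  constructor
  · intro h xi hxi
    obtain ⟨s, hs, hle⟩ := h xi hxi
    exact hS s xi hle hs
  · intro h xi hxi
    exact ⟨xi, h xi hxi, le_rfl⟩

lemma monomial_case (m11 m12 m21 : ℕ) :
    Ideal.span ({X 0, X 2} : Set (MvPolynomial (Fin 4) k)) ^ m11 ⊓
      Ideal.span ({X 0, X 3} : Set (MvPolynomial (Fin 4) k)) ^ m12 ⊓
      Ideal.span ({X 1, X 2} : Set (MvPolynomial (Fin 4) k)) ^ m21 =
    Ideal.span { f : MvPolynomial (Fin 4) k |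
      ∃ a1 a2 b1 b2 : ℕ, m11 ≤ a1 + b1 ∧ m12 ≤ a1 + b2 ∧ m21 ≤ a2 + b1 ∧
        f = X 0 ^ a1 * X 1 ^ a2 * X 2 ^ b1 * X 3 ^ b2 } := by
  have hset : { f : MvPolynomial (Fin 4) k |
      ∃ a1 a2 b1 b2 : ℕ, m11 ≤ a1 + b1 ∧ m12 ≤ a1 + b2 ∧ m21 ≤ a2 + b1 ∧
        f = X 0 ^ a1 * X 1 ^ a2 * X 2 ^ b1 * X 3 ^ b2 } =
      (fun e => monomial e (1:k)) ''
        {e | m11 ≤ e 0 + e 2 ∧ m12 ≤ e 0 + e 3 ∧ m21 ≤ e 1 + e 2} := by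
    ext f
    constructor
    · rintro ⟨a1, a2, b1, b2, H1, H2, H3, rfl⟩
      refine ⟨Finsupp.single 0 a1 + Finsupp.single 1 a2 + Finsupp.single 2 b1 +
        Finsupp.single 3 b2, ?_, ?_⟩
      · simp only [Set.mem_setOf_eq, Finsupp.add_apply, Finsupp.single_apply]
        norm_num
        omega
      · simp [X_pow_eq_monomial, monomial_mul, add_assoc]
    · rintro ⟨e, ⟨H1, H2, H3⟩, rfl⟩
      refine ⟨e 0, e 1, e 2, e 3, H1, H2, H3, ?_⟩
      have : e = Finsupp.single 0 (e 0) + Finsupp.single 1 (e 1) + Finsupp.single 2 (e 2) +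
          Finsupp.single 3 (e 3) := by
        ext n
        fin_cases n <;> simp [Finsupp.single_apply]
      rw [this]
      simp [X_pow_eq_monomial, monomial_mul, add_assoc]
  rw [hset, span_pair_pow_eq 0 2 (by decide), span_pair_pow_eq 0 3 (by decide),
    span_pair_pow_eq 1 2 (by decide)]
  ext f
  rw [Submodule.mem_inf, Submodule.mem_inf]
  rw [mem_span_monomial_up (S := {e | m11 ≤ e 0 + e 2}) (fun s t h hs => le_trans hs
      (add_le_add (Finsupp.le_def.mp h 0) (Finsupp.le_def.mp h 2))),
    mem_span_monomial_up (S := {e | m12 ≤ e 0 + e 3}) (fun s t h hs => le_trans hs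
      (add_le_add (Finsupp.le_def.mp h 0) (Finsupp.le_def.mp h 3))),
    mem_span_monomial_up (S := {e | m21 ≤ e 1 + e 2}) (fun s t h hs => le_trans hs
      (add_le_add (Finsupp.le_def.mp h 1) (Finsupp.le_def.mp h 2))),
    mem_span_monomial_up
      (S := {e | m11 ≤ e 0 + e 2 ∧ m12 ≤ e 0 + e 3 ∧ m21 ≤ e 1 + e 2})
      (fun s t h hs => ⟨le_trans hs.1
      (add_le_add (Finsupp.le_def.mp h 0) (Finsupp.le_def.mp h 2)),
      le_trans hs.2.1 (add_le_add (Finsupp.le_def.mp h 0) (Finsupp.le_def.mp h 3)),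
      le_trans hs.2.2 (add_le_add (Finsupp.le_def.mp h 1) (Finsupp.le_def.mp h 2))⟩)]
  constructor
  · rintro ⟨⟨hA, hB⟩, hC⟩ xi hxi
    exact ⟨hA xi hxi, hB xi hxi, hC xi hxi⟩
  · intro h
    exact ⟨⟨fun xi hxi => (h xi hxi).1, fun xi hxi => (h xi hxi).2.1⟩,
      fun xi hxi => (h xi hxi).2.2⟩

lemma map_inf_equiv {R S : Type*} [CommRing R] [CommRing S] (e : R ≃+* S) (I J : Ideal R) :
    Ideal.map (e : R →+* S) (I ⊓ J) =
      Ideal.map (e : R →+* S) I ⊓ Ideal.map (e : R →+* S) J := by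
  rw [Ideal.map_comap_of_equiv, Ideal.map_comap_of_equiv, Ideal.map_comap_of_equiv,
    Ideal.comap_inf]

end FatAux

/-- Proposition 2.6 (generator description): `I_W` is generated by the products of
powers of the four lines whose exponents satisfy the three vanishing conditions. -/
theorem fat_three_points_generated_by_products
    {k : Type*} [Field k]
    (h1 h2 v1 v2 : MvPolynomial (Fin 4) k)
    (hh1 : h1 ∈ Submodule.span k ({X 0, X 1} : Set (MvPolynomial (Fin 4) k)))
    (hh2 : h2 ∈ Submodule.span k ({X 0, X 1} : Set (MvPolynomial (Fin 4) k)))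
    (hhind : LinearIndependent k ![h1, h2])
    (hv1 : v1 ∈ Submodule.span k ({X 2, X 3} : Set (MvPolynomial (Fin 4) k)))
    (hv2 : v2 ∈ Submodule.span k ({X 2, X 3} : Set (MvPolynomial (Fin 4) k)))
    (hvind : LinearIndependent k ![v1, v2])
    (m11 m12 m21 : ℕ)
    (IW : Ideal (MvPolynomial (Fin 4) k))
    (hIW : IW = Ideal.span {h1, v1} ^ m11 ⊓ Ideal.span {h1, v2} ^ m12 ⊓
        Ideal.span {h2, v1} ^ m21) :
    IW = Ideal.span { f : MvPolynomial (Fin 4) k |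
      ∃ a1 a2 b1 b2 : ℕ, m11 ≤ a1 + b1 ∧ m12 ≤ a1 + b2 ∧ m21 ≤ a2 + b1 ∧
        f = h1 ^ a1 * h2 ^ a2 * v1 ^ b1 * v2 ^ b2 } := by
  classical
  obtain ⟨a, b, hab⟩ := Submodule.mem_span_pair.mp hh1
  obtain ⟨c, d, hcd⟩ := Submodule.mem_span_pair.mp hh2
  obtain ⟨p, q, hpq⟩ := Submodule.mem_span_pair.mp hv1
  obtain ⟨r, s, hrs⟩ := Submodule.mem_span_pair.mp hv2
  have hD : a * d - b * c ≠ 0 := FatAux.det_ne_zero hhind hab hcd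
  have hD' : p * s - q * r ≠ 0 := FatAux.det_ne_zero hvind hpq hrs
  have hD2 : d * a - b * c ≠ 0 := by contrapose! hD; linear_combination hD
  have hD3 : a * d - c * b ≠ 0 := by contrapose! hD; linear_combination hD
  have hD4 : d * a - c * b ≠ 0 := by contrapose! hD; linear_combination hD
  have hD5 : s * p - q * r ≠ 0 := by contrapose! hD'; linear_combination hD'
  have hD6 : p * s - r * q ≠ 0 := by contrapose! hD'; linear_combination hD'
  have hD7 : s * p - r * q ≠ 0 := by contrapose! hD'; linear_combination hD'
  set F : Fin 4 → MvPolynomial (Fin 4) k := ![h1, h2, v1, v2] with hF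
  set G : Fin 4 → MvPolynomial (Fin 4) k :=
    ![(d/(a * d - b * c)) • X 0 + (-(b/(a * d - b * c))) • X 1, (-(c/(a * d - b * c))) • X 0 + (a/(a * d - b * c)) • X 1,
      (s/(p * s - q * r)) • X 2 + (-(q/(p * s - q * r))) • X 3, (-(r/(p * s - q * r))) • X 2 + (p/(p * s - q * r)) • X 3] with hG
  set φ : MvPolynomial (Fin 4) k →ₐ[k] MvPolynomial (Fin 4) k := aeval F with hφ
  set ψ : MvPolynomial (Fin 4) k →ₐ[k] MvPolynomial (Fin 4) k := aeval G with hψ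
  have hφψ : φ.comp ψ = AlgHom.id k _ := by
    apply MvPolynomial.algHom_ext
    intro i
    fin_cases i <;>
      simp only [AlgHom.comp_apply, AlgHom.id_apply, hφ, hψ, hG, hF, Fin.zero_eta,
        Fin.mk_one, Fin.isValue, aeval_X, Matrix.cons_val_zero, Matrix.cons_val_one,
        Matrix.head_cons, map_add, map_smul, Matrix.cons_val_two, Matrix.cons_val_three,
        Matrix.tail_cons, Fin.reduceFinMk] <;>
      simp only [← hab, ← hcd, ← hpq, ← hrs] <;> match_scalars <;> field_simp [hD, hD', hD2, hD3, hD4, hD5, hD6, hD7] <;> ring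
  have hψφ : ψ.comp φ = AlgHom.id k _ := by
    apply MvPolynomial.algHom_ext
    intro i
    fin_cases i <;>
      simp only [AlgHom.comp_apply, AlgHom.id_apply, hφ, hF, Fin.zero_eta,
        Fin.mk_one, Fin.isValue, aeval_X, Matrix.cons_val_zero, Matrix.cons_val_one,
        Matrix.head_cons, Matrix.cons_val_two, Matrix.cons_val_three,
        Matrix.tail_cons, Fin.reduceFinMk] <;>
      simp only [← hab, ← hcd, ← hpq, ← hrs] <;>
      simp only [map_add, map_smul, hψ, hG, aeval_X, Matrix.cons_val_zero,
        Matrix.cons_val_one, Matrix.head_cons, Matrix.cons_val_two,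
        Matrix.cons_val_three, Matrix.tail_cons, Fin.isValue] <;>
      match_scalars <;> field_simp [hD, hD', hD2, hD3, hD4, hD5, hD6, hD7] <;> ring
  set e : MvPolynomial (Fin 4) k ≃ₐ[k] MvPolynomial (Fin 4) k :=
    AlgEquiv.ofAlgHom φ ψ hφψ hψφ with he
  set E : MvPolynomial (Fin 4) k ≃+* MvPolynomial (Fin 4) k := e.toRingEquiv with hE
  have hE0 : (E : MvPolynomial (Fin 4) k →+* MvPolynomial (Fin 4) k) (X 0) = h1 := by
    simp [hE, he, hφ, hF, aeval_X]
  have hE1 : (E : MvPolynomial (Fin 4) k →+* MvPolynomial (Fin 4) k) (X 1) = h2 := by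
    simp [hE, he, hφ, hF, aeval_X]
  have hE2 : (E : MvPolynomial (Fin 4) k →+* MvPolynomial (Fin 4) k) (X 2) = v1 := by
    simp [hE, he, hφ, hF, aeval_X]
  have hE3 : (E : MvPolynomial (Fin 4) k →+* MvPolynomial (Fin 4) k) (X 3) = v2 := by
    simp [hE, he, hφ, hF, aeval_X]
  have hmap1 : Ideal.map (E : MvPolynomial (Fin 4) k →+* MvPolynomial (Fin 4) k)
      (Ideal.span {X 0, X 2}) = Ideal.span {h1, v1} := by
    rw [Ideal.map_span, Set.image_insert_eq, Set.image_singleton, hE0, hE2]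
  have hmap2 : Ideal.map (E : MvPolynomial (Fin 4) k →+* MvPolynomial (Fin 4) k)
      (Ideal.span {X 0, X 3}) = Ideal.span {h1, v2} := by
    rw [Ideal.map_span, Set.image_insert_eq, Set.image_singleton, hE0, hE3]
  have hmap3 : Ideal.map (E : MvPolynomial (Fin 4) k →+* MvPolynomial (Fin 4) k)
      (Ideal.span {X 1, X 2}) = Ideal.span {h2, v1} := by
    rw [Ideal.map_span, Set.image_insert_eq, Set.image_singleton, hE1, hE2]
  have key := congrArg (Ideal.map (E : MvPolynomial (Fin 4) k →+* MvPolynomial (Fin 4) k))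
    (FatAux.monomial_case (k := k) m11 m12 m21)
  rw [FatAux.map_inf_equiv, FatAux.map_inf_equiv, Ideal.map_pow, Ideal.map_pow,
    Ideal.map_pow, hmap1, hmap2, hmap3, Ideal.map_span] at key
  rw [hIW, key]
  congr 1
  ext f
  constructor
  · rintro ⟨g, ⟨a1, a2, b1, b2, H1, H2, H3, rfl⟩, rfl⟩
    refine ⟨a1, a2, b1, b2, H1, H2, H3, ?_⟩
    simp only [map_mul, map_pow, hE0, hE1, hE2, hE3]
  · rintro ⟨a1, a2, b1, b2, H1, H2, H3, rfl⟩
    refine ⟨X 0 ^ a1 * X 1 ^ a2 * X 2 ^ b1 * X 3 ^ b2,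
      ⟨a1, a2, b1, b2, H1, H2, H3, rfl⟩, ?_⟩
    simp only [map_mul, map_pow, hE0, hE1, hE2, hE3]
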